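/- The restriction of the quotient homomorphism q: B_n^+ → Σ_n (sending σ_i to the transposition (i, i+1)) to the set S_n = {x ∈ B_n^+ : x is a left divisor of Δ} of permutation braids is a bijection onto the symmetric group Σ_n. -/

import Mathlib

/-! Basic definitions for the braid group `B_n`, its Garside structure,
and related notions, following Garside/El-Rifai–Morton.
Generators are indexed by `i : Fin (n-1)`, with `σ i` corresponding to the
Artin generator `σ_{i+1}` (1-based) of the paper. -/

/-- The braid relations, as a set of elements of the free group. -/
def braidRels (n : ℕ) : Set (FreeGroup (Fin (n - 1))) :=
  { r | (∃ i j : Fin (n - 1), (i : ℕ) + 1 < (j : ℕ) ∧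
          r = .of i * .of j * (.of i)⁻¹ * (.of j)⁻¹) ∨
        (∃ i j : Fin (n - 1), (i : ℕ) + 1 = (j : ℕ) ∧
          r = (.of i * .of j * .of i) * (.of j * .of i * .of j)⁻¹) }

/-- The braid group on `n` strands. -/
abbrev BraidGroup (n : ℕ) := PresentedGroup (braidRels n)

namespace BraidGroup

variable {n : ℕ}

/-- The Artin generator `σ_{i+1}` (`i` is a 0-based index). -/
def σ (i : Fin (n - 1)) : BraidGroup n := PresentedGroup.of i

/-- `σ'` with a natural-number 0-based index (junk value `1` out of range). -/
def σ' (n : ℕ) (i : ℕ) : BraidGroup n := if h : i < n - 1 then σ ⟨i, h⟩ else 1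

/-- The fundamental braid `Δ = (σ_1⋯σ_{n-1})(σ_1⋯σ_{n-2})⋯(σ_1σ_2)σ_1`. -/
def Δ (n : ℕ) : BraidGroup n :=
  (((List.range (n - 1)).reverse).map
    (fun j => ((List.range (j + 1)).map (σ' n)).prod)).prod

/-- The monoid of positive braids inside `B_n` (the image of `B_n^+`). -/
def positives (n : ℕ) : Submonoid (BraidGroup n) :=
  Submonoid.closure (Set.range (σ (n := n)))

/-- `x` is a positive braid. -/
def IsPositive (x : BraidGroup n) : Prop := x ∈ positives n

/-- The prefix (left-divisibility) order: `x ≼ y` iff `x⁻¹y` is positive. -/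
def LeftDvd (x y : BraidGroup n) : Prop := ∃ p, IsPositive p ∧ x * p = y

/-- The right-divisibility order: `x ≼_R y` iff `y x⁻¹` is positive. -/
def RightDvd (x y : BraidGroup n) : Prop := ∃ p, IsPositive p ∧ p * x = y

/-- Permutation braids: positive left divisors of `Δ`. -/
def IsPermBraid (x : BraidGroup n) : Prop := IsPositive x ∧ LeftDvd x (Δ n)

/-- The involution `τ` of `B_n`, determined by `τ(σ_i) = σ_{n-i}`
(on 0-based indices: `i ↦ (n-2) - i`, i.e. `Fin.rev`). -/
noncomputable def τ (n : ℕ) : BraidGroup n →* BraidGroup n :=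
  Classical.epsilon (fun f => ∀ i : Fin (n - 1), f (σ i) = σ i.rev)

/-- `τ^u` for an integer `u`: equals `τ` for odd `u` and the identity for even `u`
(`τ` is an involution). -/
noncomputable def τpow (u : ℤ) (x : BraidGroup n) : BraidGroup n :=
  if Even u then x else τ n x

/-- The product `a⬝b` of a permutation braid `a` and a positive braid `b` is left
weighted iff `a* ∧ b = e`, i.e. no generator left-divides both `a* = a⁻¹Δ` and `b`. -/
def IsLeftWeighted (a b : BraidGroup n) : Prop :=
  ∀ i : Fin (n - 1), ¬ (LeftDvd (σ i) (a⁻¹ * Δ n) ∧ LeftDvd (σ i) b)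

/-- `Δ^u x_1 ⋯ x_k` is the left weighted form of `x`, where `L = [x_1, …, x_k]`. -/
def IsWeightedForm (u : ℤ) (L : List (BraidGroup n)) (x : BraidGroup n) : Prop :=
  (∀ a ∈ L, IsPermBraid a ∧ a ≠ 1 ∧ a ≠ Δ n) ∧
  L.Chain' IsLeftWeighted ∧
  x = (Δ n) ^ u * L.prod

/-- The left weighted form of a braid (chosen by choice; it exists and is unique). -/
noncomputable def wf (x : BraidGroup n) : ℤ × List (BraidGroup n) :=
  Classical.epsilon (fun p => IsWeightedForm p.1 p.2 x)

/-- The infimum `inf(x)`. -/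
noncomputable def binf (x : BraidGroup n) : ℤ := (wf x).1

/-- The canonical length `ℓ(x)`. -/
noncomputable def blen (x : BraidGroup n) : ℕ := (wf x).2.length

/-- The supremum `sup(x) = inf(x) + ℓ(x)`. -/
noncomputable def bsup (x : BraidGroup n) : ℤ := binf x + blen x

/-- The head `H(x)`: the first factor of the weighted form. -/
noncomputable def bhead (x : BraidGroup n) : BraidGroup n := ((wf x).2.head?).getD 1

/-- The tail `T(x)`: the last factor of the weighted form. -/
noncomputable def btail (x : BraidGroup n) : BraidGroup n := ((wf x).2.getLast?).getD 1

/-- Cycling: `c(x) = τ^u(H(x))⁻¹ · x · τ^u(H(x))`. -/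
noncomputable def cyc (x : BraidGroup n) : BraidGroup n :=
  (τpow (binf x) (bhead x))⁻¹ * x * τpow (binf x) (bhead x)

/-- Decycling: `d(x) = T(x) · x · T(x)⁻¹`. -/
noncomputable def decyc (x : BraidGroup n) : BraidGroup n :=
  btail x * x * (btail x)⁻¹

/-- `x` is cyclically weighted: `x_k ⬝ τ^u(x_1)` is left weighted. -/
noncomputable def IsCW (x : BraidGroup n) : Prop :=
  IsLeftWeighted (btail x) (τpow (binf x) (bhead x))

/-- `x` is weakly cyclically weighted: `H(x·τ^u(H(x))) = H(x)`. -/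
noncomputable def IsWCW (x : BraidGroup n) : Prop :=
  bhead (x * τpow (binf x) (bhead x)) = bhead x

/-- The summit set of `x`: conjugates with maximal infimum. -/
def SS (x : BraidGroup n) : Set (BraidGroup n) :=
  { y | IsConj x y ∧ ∀ z, IsConj x z → binf z ≤ binf y }

/-- The super summit set of `x`: conjugates with maximal infimum and minimal supremum. -/
def SSS (x : BraidGroup n) : Set (BraidGroup n) :=
  { y | y ∈ SS x ∧ ∀ z, IsConj x z → bsup y ≤ bsup z }

/-- The ultra summit set of `x`. -/
def USS (x : BraidGroup n) : Set (BraidGroup n) :=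
  { y ∈ SSS x | ∃ M : ℕ, 0 < M ∧ cyc^[M] y = y }

/-- The reduced super summit set of `x`. -/
def RSSS (x : BraidGroup n) : Set (BraidGroup n) :=
  { y | IsConj x y ∧ (∃ M : ℕ, 0 < M ∧ cyc^[M] y = y) ∧
        (∃ N : ℕ, 0 < N ∧ decyc^[N] y = y) }

/-- The left meet (greatest common left divisor) of two braids. -/
noncomputable def leftMeet (a b : BraidGroup n) : BraidGroup n :=
  Classical.epsilon (fun m => IsPositive m ∧ LeftDvd m a ∧ LeftDvd m b ∧
    ∀ c, IsPositive c → LeftDvd c a → LeftDvd c b → LeftDvd c m)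

/-- `x` is periodic: some positive power of `x` is a power of `Δ²`. -/
def IsPeriodic (x : BraidGroup n) : Prop :=
  ∃ m : ℕ, 0 < m ∧ ∃ k : ℤ, x ^ m = (Δ n) ^ (2 * k)

/-- The free generator `x_{i+1}` of `π₁` of the `n`-punctured disk (0-based index;
junk value `1` out of range). -/
def freeGen (n : ℕ) (i : ℕ) : FreeGroup (Fin n) := if h : i < n then .of ⟨i, h⟩ else 1

/-- The Artin action of `B_n` on the free group `F_n`:
`σ_i` sends `x_i ↦ x_i x_{i+1} x_i⁻¹`, `x_{i+1} ↦ x_i`, fixing the other generators. -/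
noncomputable def artin (n : ℕ) : BraidGroup n →* Monoid.End (FreeGroup (Fin n)) :=
  Classical.epsilon (fun f => ∀ i : Fin (n - 1),
    f (σ i) = FreeGroup.lift (fun j : Fin n =>
      if (j : ℕ) = (i : ℕ) then freeGen n i * freeGen n (i + 1) * (freeGen n i)⁻¹
      else if (j : ℕ) = (i : ℕ) + 1 then freeGen n i
      else FreeGroup.of j))

/-- The element of `π₁` represented by the round curve enclosing punctures
`I.1 + 1, …, I.2` (1-based): the product `x_{I.1+1} ⋯ x_{I.2}`. -/
def curveWord (n : ℕ) (I : ℕ × ℕ) : FreeGroup (Fin n) :=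
  ((List.range (I.2 - I.1)).map (fun t => freeGen n (I.1 + t))).prod

/-- An essential round curve: it encloses at least `2` and at most `n-1` punctures. -/
def EssentialCurve (n : ℕ) (I : ℕ × ℕ) : Prop :=
  I.1 + 2 ≤ I.2 ∧ I.2 ≤ n ∧ I.2 - I.1 ≤ n - 1

/-- Two round curves are disjoint (as curves): the intervals are disjoint or nested. -/
def CurvesCompatible (I J : ℕ × ℕ) : Prop :=
  I.2 ≤ J.1 ∨ J.2 ≤ I.1 ∨ (I.1 ≤ J.1 ∧ J.2 ≤ I.2) ∨ (J.1 ≤ I.1 ∧ I.2 ≤ J.2)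

/-- `x` is reducible: some conjugate of `x` preserves, up to conjugacy in `π₁`
(i.e. up to isotopy) and orientation, a nonempty system of disjoint essential
round curves. -/
noncomputable def IsReducible (x : BraidGroup n) : Prop :=
  ∃ y, IsConj x y ∧ ∃ F : Finset (ℕ × ℕ), F.Nonempty ∧
    (∀ I ∈ F, EssentialCurve n I) ∧
    (∀ I ∈ F, ∀ J ∈ F, I ≠ J → CurvesCompatible I J) ∧
    (∀ I ∈ F, ∃ J ∈ F, ∃ g : FreeGroup (Fin n),
      artin n y (curveWord n I) = g * curveWord n J * g⁻¹ ∨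
      artin n y (curveWord n I) = g * (curveWord n J)⁻¹ * g⁻¹)

/-- `x` is pseudo-Anosov: neither periodic nor reducible (Nielsen–Thurston). -/
noncomputable def IsPseudoAnosov (x : BraidGroup n) : Prop :=
  ¬ IsPeriodic x ∧ ¬ IsReducible x

/-- `σ_i` (1-based index `i`) left-divides the positive braid `w`, i.e. `i` is
 a descent of `w`. -/
def HasDescent (n : ℕ) (i : ℕ) (w : BraidGroup n) : Prop := LeftDvd (σ' n (i - 1)) w

/-- `D(n,k,i)`: the probability that a product of `k` independent uniformly random
permutation braids begins with the descent `i` (1-based), computed by counting. -/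
noncomputable def descentProb (n k : ℕ) (i : ℕ) : ℝ :=
  ({ f : Fin k → BraidGroup n | (∀ j, IsPermBraid (f j)) ∧
      HasDescent n i (List.ofFn f).prod }.ncard : ℝ) / (n.factorial ^ k : ℝ)

/-- `D(n,k)`: the expected number of descents of a product of `k` random
permutation braids. -/
noncomputable def descentExp (n k : ℕ) : ℝ :=
  ∑ i ∈ Finset.Icc 1 (n - 1), descentProb n k i

/-- `d(n,k) = D(n,k) - D(n,k-1)`: the expected number of descents contributed by
the `k`-th factor. -/
noncomputable def descentInc (n k : ℕ) : ℝ := descentExp n k - descentExp n (k - 1)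


/-- The braid relations on the free monoid. -/
def braidRelsMon (n : ℕ) : FreeMonoid (Fin (n - 1)) → FreeMonoid (Fin (n - 1)) → Prop :=
  fun a b =>
    (∃ i j : Fin (n - 1), (i : ℕ) + 1 < (j : ℕ) ∧
      a = .of i * .of j ∧ b = .of j * .of i) ∨
    (∃ i j : Fin (n - 1), (i : ℕ) + 1 = (j : ℕ) ∧
      a = .of i * .of j * .of i ∧ b = .of j * .of i * .of j)

/-- The positive braid monoid `B_n^+`. -/
abbrev BraidMonoid (n : ℕ) := PresentedMonoid (braidRelsMon n)

/-- The generator `σ_{i+1}` of `B_n^+` (0-based `ℕ`-index, junk value `1` out of range). -/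
def σM (n : ℕ) (i : ℕ) : BraidMonoid n :=
  if h : i < n - 1 then PresentedMonoid.of (braidRelsMon n) ⟨i, h⟩ else 1

/-- The fundamental braid `Δ` in `B_n^+`. -/
def ΔM (n : ℕ) : BraidMonoid n :=
  (((List.range (n - 1)).reverse).map
    (fun j => ((List.range (j + 1)).map (σM n)).prod)).prod

/-- The quotient homomorphism `q : B_n^+ → Σ_n` sending `σ_i` to the
transposition `(i, i+1)` (obtained by adding the relations `σ_i² = 1`). -/
noncomputable def permQuot (n : ℕ) : BraidMonoid n →* Equiv.Perm (Fin n) :=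
  Classical.epsilon (fun f => ∀ i : Fin (n - 1),
    f (PresentedMonoid.of (braidRelsMon n) i) =
      Equiv.swap ⟨i, by omega⟩ ⟨i + 1, by omega⟩)

/-- The set of permutation braids: left divisors of `Δ` in `B_n^+`. -/
def permBraids (n : ℕ) : Set (BraidMonoid n) := { x | ∃ z, x * z = ΔM n }

def pa (i : Fin (n-1)) : Fin n := ⟨i, by have := i.isLt; omega⟩
def pb (i : Fin (n-1)) : Fin n := ⟨i+1, by have := i.isLt; omega⟩

@[simp] lemma pa_val (i : Fin (n-1)) : (pa i).val = i.val := rfl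
@[simp] lemma pb_val (i : Fin (n-1)) : (pb i).val = i.val + 1 := rfl

structure CM (n : ℕ) where
  ρ : Equiv.Perm (Fin n)
  c : Fin n → Fin n → ℕ

lemma CM.ext' {a b : CM n} (h1 : a.ρ = b.ρ) (h2 : a.c = b.c) : a = b := by
  cases a; cases b; simp_all

instance : Monoid (CM n) where
  one := ⟨1, fun _ _ => 0⟩
  mul a b := ⟨a.ρ * b.ρ, fun s t => a.c s t + b.c (a.ρ⁻¹ s) (a.ρ⁻¹ t)⟩
  mul_assoc a b c := by
    refine CM.ext' (mul_assoc _ _ _) ?_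
    funext s t
    show (a.c s t + b.c _ _) + c.c ((a.ρ*b.ρ)⁻¹ s) ((a.ρ*b.ρ)⁻¹ t) = a.c s t + (_ + _)
    simp [mul_assoc, Equiv.Perm.mul_apply, add_assoc]
  one_mul a := by
    refine CM.ext' (one_mul _) ?_
    funext s t
    show 0 + a.c ((1 : Equiv.Perm (Fin n))⁻¹ s) ((1 : Equiv.Perm (Fin n))⁻¹ t) = a.c s t
    simp
  mul_one a := by
    refine CM.ext' (mul_one _) ?_
    funext s t
    show a.c s t + 0 = a.c s t
    simp

lemma CM.mul_ρ (a b : CM n) : (a * b).ρ = a.ρ * b.ρ := rfl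
lemma CM.mul_c (a b : CM n) (s t : Fin n) :
    (a * b).c s t = a.c s t + b.c (a.ρ⁻¹ s) (a.ρ⁻¹ t) := rfl
lemma CM.one_ρ : (1 : CM n).ρ = 1 := rfl
lemma CM.one_c (s t : Fin n) : (1 : CM n).c s t = 0 := rfl

def sw (i : Fin (n-1)) : Equiv.Perm (Fin n) := Equiv.swap (pa i) (pb i)

lemma sw_val (i : Fin (n-1)) (x : Fin n) :
    ((sw i) x).val = if x.val = i.val then i.val + 1 else if x.val = i.val + 1 then i.val else x.val := by
  rcases eq_or_ne x (pa i) with h | h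
  · subst h; simp [sw, Equiv.swap_apply_left, pa, pb]
  · rcases eq_or_ne x (pb i) with h2 | h2
    · subst h2
      have : ((sw i) (pb i)).val = (pa i).val := by rw [sw, Equiv.swap_apply_right]
      rw [this]; simp [pa, pb]
    · rw [sw, Equiv.swap_apply_of_ne_of_ne h h2]
      have h' : x.val ≠ i.val := fun hh => h (Fin.ext hh)
      have h2' : x.val ≠ i.val + 1 := fun hh => h2 (Fin.ext hh)
      simp [h', h2']

@[simp] lemma sw_inv (i : Fin (n-1)) : (sw i)⁻¹ = sw i := by
  simp [sw]

@[simp] lemma sw_sw (i : Fin (n-1)) (x : Fin n) : (sw i) ((sw i) x) = x := by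
  rw [sw, Equiv.swap_apply_self]

lemma sw_pa (i : Fin (n-1)) : (sw i) (pa i) = pb i := Equiv.swap_apply_left _ _
lemma sw_pb (i : Fin (n-1)) : (sw i) (pb i) = pa i := Equiv.swap_apply_right _ _
lemma sw_fix (i : Fin (n-1)) {x : Fin n} (h1 : x.val ≠ i.val) (h2 : x.val ≠ i.val + 1) :
    (sw i) x = x :=
  Equiv.swap_apply_of_ne_of_ne (fun hh => h1 (by rw [hh]; rfl)) (fun hh => h2 (by rw [hh]; rfl))

lemma sw_comm {i j : Fin (n-1)} (h : i.val + 1 < j.val) : sw i * sw j = sw j * sw i := by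
  refine Equiv.ext fun x => Fin.ext ?_
  have hi := i.isLt; have hj := j.isLt; have hx := x.isLt
  simp only [Equiv.Perm.mul_apply, sw_val]
  split_ifs <;> omega

set_option maxHeartbeats 1000000 in
lemma sw_braid {i j : Fin (n-1)} (h : i.val + 1 = j.val) :
    sw i * sw j * sw i = sw j * sw i * sw j := by
  refine Equiv.ext fun x => Fin.ext ?_
  have hi := i.isLt; have hj := j.isLt; have hx := x.isLt
  simp only [Equiv.Perm.mul_apply, sw_val]
  split_ifs <;> omega

def dd (x y : Fin n) : ℕ := if x = y then 1 else 0

def genc (i : Fin (n-1)) (s t : Fin n) : ℕ :=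
  dd s (pa i) * dd t (pb i) + dd s (pb i) * dd t (pa i)

def gen (i : Fin (n-1)) : CM n := ⟨sw i, genc i⟩

lemma gen_ρ (i : Fin (n-1)) : (gen i).ρ = sw i := rfl
lemma gen_c (i : Fin (n-1)) : (gen i).c = genc i := rfl

lemma dd_sw (i : Fin (n-1)) (x y : Fin n) : dd ((sw i) x) y = dd x ((sw i) y) := by
  have : (sw i) x = y ↔ x = (sw i) y := by
    rw [Equiv.apply_eq_iff_eq_symm_apply]
    rw [show (sw i).symm = sw i from by simp [sw]]
  simp only [dd, this]

lemma genc_val (i : Fin (n-1)) (s t : Fin n) :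
    genc i s t =
      if (s.val = i.val ∧ t.val = i.val + 1) ∨ (s.val = i.val + 1 ∧ t.val = i.val) then 1
      else 0 := by
  have h1 : ∀ x : Fin n, dd x (pa i) = if x.val = i.val then 1 else 0 := by
    intro x; simp only [dd, Fin.ext_iff, pa_val]
  have h2 : ∀ x : Fin n, dd x (pb i) = if x.val = i.val + 1 then 1 else 0 := by
    intro x; simp only [dd, Fin.ext_iff, pb_val]
  simp only [genc, h1, h2]
  split_ifs <;> omega

lemma gen_comm {i j : Fin (n-1)} (h : i.val + 1 < j.val) : gen i * gen j = gen j * gen i := by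
  refine CM.ext' ?_ ?_
  · show sw i * sw j = sw j * sw i
    exact sw_comm h
  · funext s t
    have hi := i.isLt; have hj := j.isLt
    show genc i s t + genc j ((sw i)⁻¹ s) ((sw i)⁻¹ t)
       = genc j s t + genc i ((sw j)⁻¹ s) ((sw j)⁻¹ t)
    have fji1 : (sw i) (pa j) = pa j := sw_fix i (by simp; omega) (by simp; omega)
    have fji2 : (sw i) (pb j) = pb j := sw_fix i (by simp; omega) (by simp; omega)
    have fij1 : (sw j) (pa i) = pa i := sw_fix j (by simp; omega) (by simp; omega)
    have fij2 : (sw j) (pb i) = pb i := sw_fix j (by simp; omega) (by simp; omega)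
    simp only [sw_inv, genc, dd_sw, fji1, fji2, fij1, fij2]
    ring

lemma gen_braid {i j : Fin (n-1)} (h : i.val + 1 = j.val) :
    gen i * gen j * gen i = gen j * gen i * gen j := by
  have hi := i.isLt; have hj := j.isLt
  have hpaj : pa j = pb i := Fin.ext (by simp; omega)
  have f1 : (sw i) (pb j) = pb j := sw_fix i (by simp; omega) (by simp; omega)
  have f2 : (sw j) (pa i) = pa i := sw_fix j (by simp; omega) (by simp; omega)
  have e1 : (sw i) (pa j) = pa i := by rw [hpaj, sw_pb]
  have e4 : (sw j) (pb i) = pb j := by rw [← hpaj, sw_pa]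
  refine CM.ext' ?_ ?_
  · show sw i * sw j * sw i = sw j * sw i * sw j
    exact sw_braid h
  · funext s t
    show (genc i s t + genc j ((sw i)⁻¹ s) ((sw i)⁻¹ t))
          + genc i ((sw i * sw j)⁻¹ s) ((sw i * sw j)⁻¹ t)
       = (genc j s t + genc i ((sw j)⁻¹ s) ((sw j)⁻¹ t))
          + genc j ((sw j * sw i)⁻¹ s) ((sw j * sw i)⁻¹ t)
    simp only [mul_inv_rev, sw_inv, Equiv.Perm.mul_apply]
    simp only [genc, dd_sw, hpaj, e4, f1, f2, sw_pa, sw_pb]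
    ring

/-! ### the homomorphisms -/

lemma gen_rels (n : ℕ) : ∀ a b, braidRelsMon n a b →
    FreeMonoid.lift (gen (n := n)) a = FreeMonoid.lift (gen (n := n)) b := by
  rintro a b (⟨i, j, hij, rfl, rfl⟩ | ⟨i, j, hij, rfl, rfl⟩) <;>
    simp only [map_mul, FreeMonoid.lift_eval_of]
  · exact gen_comm hij
  · exact gen_braid hij

def phi (n : ℕ) : BraidMonoid n →* CM n := PresentedMonoid.lift gen (gen_rels n)

abbrev σB (i : Fin (n-1)) : BraidMonoid n := PresentedMonoid.of (braidRelsMon n) i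

@[simp] lemma phi_of (i : Fin (n-1)) : phi n (σB i) = gen i := rfl

def lenH (n : ℕ) : BraidMonoid n →* Multiplicative ℕ :=
  PresentedMonoid.lift (fun _ => Multiplicative.ofAdd 1) (by
    rintro a b (⟨i, j, hij, rfl, rfl⟩ | ⟨i, j, hij, rfl, rfl⟩) <;>
      simp only [map_mul, FreeMonoid.lift_eval_of])

def lenB (x : BraidMonoid n) : ℕ := Multiplicative.toAdd (lenH n x)

lemma lenB_mul (x y : BraidMonoid n) : lenB (x * y) = lenB x + lenB y := by
  simp [lenB, map_mul]

@[simp] lemma lenB_one : lenB (1 : BraidMonoid n) = 0 := by simp [lenB]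

@[simp] lemma lenB_σB (i : Fin (n-1)) : lenB (σB i) = 1 := rfl

/-- braid words -/
def wb (l : List (Fin (n-1))) : BraidMonoid n := (l.map σB).prod

@[simp] lemma wb_nil : wb ([] : List (Fin (n-1))) = 1 := rfl
lemma wb_cons (k : Fin (n-1)) (l : List (Fin (n-1))) : wb (k :: l) = σB k * wb l := by
  simp [wb]

lemma exists_word (x : BraidMonoid n) : ∃ l : List (Fin (n-1)), x = wb l := by
  obtain ⟨a, rfl⟩ := PresentedMonoid.surjective_mk (rels := braidRelsMon n) x
  refine ⟨FreeMonoid.toList a, ?_⟩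
  conv_lhs => rw [← FreeMonoid.ofList_toList a]
  generalize FreeMonoid.toList a = l
  induction l with
  | nil => rfl
  | cons k l ih =>
      rw [FreeMonoid.ofList_cons, map_mul, ih, wb_cons]
      rfl

@[simp] lemma lenB_wb (l : List (Fin (n-1))) : lenB (wb l) = l.length := by
  induction l with
  | nil => simp
  | cons k l ih => rw [wb_cons, lenB_mul, ih, lenB_σB, List.length_cons]; omega

lemma lenB_eq_zero {x : BraidMonoid n} (h : lenB x = 0) : x = 1 := by
  obtain ⟨l, rfl⟩ := exists_word x
  rw [lenB_wb] at h
  rw [List.length_eq_zero_iff] at h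
  subst h; rfl

lemma head_letter {x : BraidMonoid n} (h : lenB x ≠ 0) :
    ∃ (j : Fin (n-1)) (x₁ : BraidMonoid n), x = σB j * x₁ := by
  obtain ⟨l, rfl⟩ := exists_word x
  cases l with
  | nil => simp at h
  | cons k l => exact ⟨k, wb l, wb_cons k l⟩

/-- relations at the braid monoid level -/
lemma σB_comm {i j : Fin (n-1)} (h : i.val + 1 < j.val) : σB i * σB j = σB j * σB i := by
  exact Quotient.sound (ConGen.Rel.of _ _ (Or.inl ⟨i, j, h, rfl, rfl⟩))

lemma σB_braid {i j : Fin (n-1)} (h : i.val + 1 = j.val) :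
    σB i * σB j * σB i = σB j * σB i * σB j := by
  exact Quotient.sound (ConGen.Rel.of _ _ (Or.inr ⟨i, j, h, rfl, rfl⟩))

/-! ### crossing numbers of braids -/

def cB (x : BraidMonoid n) : Fin n → Fin n → ℕ := (phi n x).c
def ρB (x : BraidMonoid n) : Equiv.Perm (Fin n) := (phi n x).ρ

lemma cB_gen_mul (i : Fin (n-1)) (x : BraidMonoid n) (s t : Fin n) :
    cB (σB i * x) s t = genc i s t + cB x ((sw i) s) ((sw i) t) := by
  simp only [cB, map_mul, phi_of, CM.mul_c, gen_ρ, gen_c, sw_inv]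

lemma ρB_gen_mul (i : Fin (n-1)) (x : BraidMonoid n) : ρB (σB i * x) = sw i * ρB x := by
  simp only [ρB, map_mul, phi_of, CM.mul_ρ, gen_ρ]

lemma cB_mul (x y : BraidMonoid n) (s t : Fin n) :
    cB (x * y) s t = cB x s t + cB y ((ρB x)⁻¹ s) ((ρB x)⁻¹ t) := by
  simp only [cB, ρB, map_mul, CM.mul_c]

lemma ρB_mul (x y : BraidMonoid n) : ρB (x * y) = ρB x * ρB y := by
  simp only [ρB, map_mul, CM.mul_ρ]

@[simp] lemma cB_one (s t : Fin n) : cB (1 : BraidMonoid n) s t = 0 := by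
  rw [cB, map_one]; rfl

@[simp] lemma ρB_one : ρB (1 : BraidMonoid n) = 1 := by
  rw [ρB, map_one]; rfl


/-! ### the parity invariant -/

def indb (ρ : Equiv.Perm (Fin n)) (s t : Fin n) : ℕ :=
  if (s.val < t.val ∧ (ρ⁻¹ t).val < (ρ⁻¹ s).val) ∨
     (t.val < s.val ∧ (ρ⁻¹ s).val < (ρ⁻¹ t).val) then 1 else 0

lemma indb_le_one (ρ : Equiv.Perm (Fin n)) (s t : Fin n) : indb ρ s t ≤ 1 := by
  rw [indb]; split_ifs <;> omega

lemma indb_symm (ρ : Equiv.Perm (Fin n)) (s t : Fin n) : indb ρ s t = indb ρ t s := by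
  rw [indb, indb]
  split_ifs <;> omega

set_option maxHeartbeats 1600000 in
lemma indb_gen (i : Fin (n-1)) (ρ : Equiv.Perm (Fin n)) (s t : Fin n) :
    indb (sw i * ρ) s t = (genc i s t + indb ρ ((sw i) s) ((sw i) t)) % 2 := by
  have hinv : ∀ u, (sw i * ρ)⁻¹ u = ρ⁻¹ ((sw i) u) := by
    intro u
    rw [mul_inv_rev, Equiv.Perm.mul_apply, sw_inv]
  have key : s.val = t.val ∨ (ρ⁻¹ ((sw i) s)).val ≠ (ρ⁻¹ ((sw i) t)).val := by
    rcases eq_or_ne s t with h | h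
    · exact Or.inl (by rw [h])
    · refine Or.inr fun hv => h ?_
      have := Fin.ext hv
      have h2 : (sw i) s = (sw i) t := (ρ⁻¹).injective this
      exact (sw i).injective h2
  simp only [indb, genc_val, hinv, sw_val]
  split_ifs <;> omega

def Good (m : CM n) : Prop :=
  (∀ s t, m.c s t = m.c t s) ∧ ∀ s t, m.c s t % 2 = indb m.ρ s t

lemma good_one : Good (1 : CM n) := by
  constructor
  · intro s t; rfl
  · intro s t
    show 0 % 2 = indb 1 s t
    rw [indb]
    simp only [inv_one, Equiv.Perm.one_apply]
    split_ifs <;> omega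

lemma genc_symm (i : Fin (n-1)) (s t : Fin n) : genc i s t = genc i t s := by
  rw [genc, genc]; ring

lemma good_gen_mul (i : Fin (n-1)) {m : CM n} (hm : Good m) : Good (gen i * m) := by
  have hc : ∀ s t, (gen i * m).c s t = genc i s t + m.c ((sw i) s) ((sw i) t) := by
    intro s t; rw [CM.mul_c, gen_c, gen_ρ, sw_inv]
  have hρ : (gen i * m).ρ = sw i * m.ρ := by rw [CM.mul_ρ, gen_ρ]
  constructor
  · intro s t; rw [hc, hc, hm.1 ((sw i) s) ((sw i) t), genc_symm]
  · intro s t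
    rw [hc, hρ, indb_gen]
    have h2 := hm.2 ((sw i) s) ((sw i) t)
    omega

lemma goodB (x : BraidMonoid n) : Good (phi n x) := by
  obtain ⟨l, rfl⟩ := exists_word x
  induction l with
  | nil =>
      show Good (phi n 1)
      rw [map_one]; exact good_one
  | cons k l ih =>
      rw [wb_cons, map_mul, phi_of]
      exact good_gen_mul k ih

lemma cB_symm (x : BraidMonoid n) (s t : Fin n) : cB x s t = cB x t s := (goodB x).1 s t
lemma cB_parity (x : BraidMonoid n) (s t : Fin n) :
    cB x s t % 2 = indb (ρB x) s t := (goodB x).2 s t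

def SFB (x : BraidMonoid n) : Prop := ∀ s t, cB x s t ≤ 1

lemma SFB_one : SFB (1 : BraidMonoid n) := fun s t => by simp

lemma cB_eq_indb {x : BraidMonoid n} (h : SFB x) (s t : Fin n) :
    cB x s t = indb (ρB x) s t := by
  have h1 := cB_parity x s t
  have h2 := h s t
  have h3 := indb_le_one (ρB x) s t
  omega

lemma SFB_of_gen_mul {j : Fin (n-1)} {x : BraidMonoid n} (h : SFB (σB j * x)) : SFB x := by
  intro u v
  have := h ((sw j) u) ((sw j) v)
  rw [cB_gen_mul, sw_sw, sw_sw] at this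
  omega

/-! ### the intermediate-strand lemma -/

lemma sw_mono {i : Fin (n-1)} {s t : Fin n} (h : ¬(s.val = i.val ∧ t.val = i.val + 1))
    (hlt : s.val < t.val) : ((sw i) s).val < ((sw i) t).val := by
  rw [sw_val, sw_val]
  have hs := s.isLt; have ht := t.isLt
  split_ifs <;> omega

lemma ivt_wb : ∀ (l : List (Fin (n-1))) (s1 s2 s3 : Fin n), s1.val < s2.val → s2.val < s3.val →
    1 ≤ cB (wb l) s1 s3 → 1 ≤ cB (wb l) s1 s2 + cB (wb l) s2 s3 := by
  intro l
  induction l with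
  | nil => intro s1 s2 s3 _ _ h13; rw [wb_nil] at h13; simp at h13
  | cons k l ih =>
      intro s1 s2 s3 h12 h23 h13
      rw [wb_cons, cB_gen_mul] at h13 ⊢
      rw [cB_gen_mul]
      by_cases h1 : 1 ≤ genc k s1 s2
      · omega
      by_cases h2 : 1 ≤ genc k s2 s3
      · omega
      have g12 : ¬(s1.val = k.val ∧ s2.val = k.val + 1) := by
        intro hh; apply h1; rw [genc_val, if_pos (Or.inl hh)]
      have g23 : ¬(s2.val = k.val ∧ s3.val = k.val + 1) := by
        intro hh; apply h2; rw [genc_val, if_pos (Or.inl hh)]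
      have g13 : genc k s1 s3 = 0 := by
        rw [genc_val]; split_ifs with hc <;> omega
      have m12 := sw_mono g12 h12
      have m23 := sw_mono g23 h23
      have := ih ((sw k) s1) ((sw k) s2) ((sw k) s3) m12 m23 (by omega)
      omega

lemma ivtB (x : BraidMonoid n) (s1 s2 s3 : Fin n) (h12 : s1.val < s2.val)
    (h23 : s2.val < s3.val) (h13 : 1 ≤ cB x s1 s3) :
    1 ≤ cB x s1 s2 + cB x s2 s3 := by
  obtain ⟨l, rfl⟩ := exists_word x
  exact ivt_wb l s1 s2 s3 h12 h23 h13


/-! ### the key divisibility lemma -/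

lemma keyLemma : ∀ (N : ℕ) (x : BraidMonoid n), lenB x ≤ N → SFB x →
    ∀ i : Fin (n-1), 1 ≤ cB x (pa i) (pb i) → ∃ x', x = σB i * x' := by
  intro N
  induction N with
  | zero =>
      intro x hlen _ i hc
      rw [Nat.le_zero] at hlen
      rw [lenB_eq_zero hlen] at hc
      simp at hc
  | succ N IH =>
      intro x hlen hsf i hc
      have hne : lenB x ≠ 0 := by
        intro h0
        rw [lenB_eq_zero h0] at hc; simp at hc
      obtain ⟨j, x₁, rfl⟩ := head_letter hne
      have hlen1 : lenB x₁ ≤ N := by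
        rw [lenB_mul, lenB_σB] at hlen; omega
      have hsf1 : SFB x₁ := SFB_of_gen_mul hsf
      have hi := i.isLt; have hj := j.isLt
      rcases eq_or_ne j i with rfl | hji
      · exact ⟨x₁, rfl⟩
      have hvne : j.val ≠ i.val := fun hh => hji (Fin.ext hh)
      rcases (by omega :
        (j.val + 1 < i.val ∨ i.val + 1 < j.val) ∨ i.val + 1 = j.val ∨ j.val + 1 = i.val)
        with hcase | hcase | hcase
      · -- far case
        have f1 : (sw j) (pa i) = pa i := sw_fix j (by simp; omega) (by simp; omega)
        have f2 : (sw j) (pb i) = pb i := sw_fix j (by simp; omega) (by simp; omega)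
        have g0 : genc j (pa i) (pb i) = 0 := by
          rw [genc_val, if_neg (by simp only [pa_val, pb_val]; omega)]
        have hc1 : 1 ≤ cB x₁ (pa i) (pb i) := by
          rw [cB_gen_mul, f1, f2, g0] at hc; omega
        obtain ⟨x₂, rfl⟩ := IH x₁ hlen1 hsf1 i hc1
        refine ⟨σB j * x₂, ?_⟩
        simp only [← mul_assoc]
        rcases hcase with hlt | hlt
        · rw [σB_comm hlt]
        · rw [← σB_comm hlt]
      · -- j = i + 1
        have hpb : pb i = pa j := Fin.ext (by simp; omega)
        have f1 : (sw j) (pa i) = pa i := sw_fix j (by simp; omega) (by simp; omega)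
        have e1 : (sw j) (pb i) = pb j := by rw [hpb, sw_pa]
        have g0 : genc j (pa i) (pb i) = 0 := by
          rw [genc_val, if_neg (by simp only [pa_val, pb_val]; omega)]
        have hc1 : 1 ≤ cB x₁ (pa i) (pb j) := by
          rw [cB_gen_mul, f1, e1, g0] at hc; omega
        have g1 : genc j (pa j) (pb j) = 1 := by
          simp [genc_val]
        have hBC : cB x₁ (pa j) (pb j) = 0 := by
          have h2 := hsf (pa j) (pb j)
          rw [cB_gen_mul, sw_pa, sw_pb, g1] at h2
          have h3 := cB_symm x₁ (pa j) (pb j)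
          omega
        by_cases hAB : 1 ≤ cB x₁ (pa i) (pb i)
        · obtain ⟨x₂, rfl⟩ := IH x₁ hlen1 hsf1 i hAB
          have hlen2 : lenB x₂ ≤ N := by rw [lenB_mul, lenB_σB] at hlen1; omega
          have hsf2 := SFB_of_gen_mul hsf1
          have f3 : (sw i) (pb j) = pb j := sw_fix i (by simp; omega) (by simp; omega)
          have g2 : genc i (pa i) (pb j) = 0 := by
            rw [genc_val]; simp only [pa_val, pb_val]; split_ifs <;> omega
          have hc2 : 1 ≤ cB x₂ (pa j) (pb j) := by
            rw [cB_gen_mul, sw_pa, f3, g2, hpb] at hc1; omega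
          obtain ⟨x₃, rfl⟩ := IH x₂ hlen2 hsf2 j hc2
          refine ⟨σB j * (σB i * x₃), ?_⟩
          simp only [← mul_assoc]
          rw [← σB_braid hcase]
        · exfalso
          have hab0 : cB x₁ (pa i) (pb i) = 0 := by have := hsf1 (pa i) (pb i); omega
          have := ivtB x₁ (pa i) (pb i) (pb j) (by simp) (by simp; omega) hc1
          have hBC' : cB x₁ (pb i) (pb j) = 0 := by rw [hpb]; exact hBC
          omega
      · -- j + 1 = i
        have hpa : pa i = pb j := Fin.ext (by simp; omega)
        have e1 : (sw j) (pa i) = pa j := by rw [hpa, sw_pb]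
        have f1 : (sw j) (pb i) = pb i := sw_fix j (by simp; omega) (by simp; omega)
        have g0 : genc j (pa i) (pb i) = 0 := by
          rw [genc_val, if_neg (by simp only [pa_val, pb_val]; omega)]
        have hc1 : 1 ≤ cB x₁ (pa j) (pb i) := by
          rw [cB_gen_mul, e1, f1, g0] at hc; omega
        have g1 : genc j (pa j) (pb j) = 1 := by
          simp [genc_val]
        have hAD : cB x₁ (pa j) (pb j) = 0 := by
          have h2 := hsf (pa j) (pb j)
          rw [cB_gen_mul, sw_pa, sw_pb, g1] at h2
          have h3 := cB_symm x₁ (pa j) (pb j)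
          omega
        by_cases hDC : 1 ≤ cB x₁ (pa i) (pb i)
        · obtain ⟨x₂, rfl⟩ := IH x₁ hlen1 hsf1 i hDC
          have hlen2 : lenB x₂ ≤ N := by rw [lenB_mul, lenB_σB] at hlen1; omega
          have hsf2 := SFB_of_gen_mul hsf1
          have f3 : (sw i) (pa j) = pa j := sw_fix i (by simp; omega) (by simp; omega)
          have g2 : genc i (pa j) (pb i) = 0 := by
            rw [genc_val]; simp only [pa_val, pb_val]; split_ifs <;> omega
          have hc2 : 1 ≤ cB x₂ (pa j) (pb j) := by
            rw [cB_gen_mul, f3, sw_pb, g2, hpa] at hc1; omega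
          obtain ⟨x₃, rfl⟩ := IH x₂ hlen2 hsf2 j hc2
          refine ⟨σB j * (σB i * x₃), ?_⟩
          simp only [← mul_assoc]
          rw [σB_braid hcase]
        · exfalso
          have hdc0 : cB x₁ (pa i) (pb i) = 0 := by have := hsf1 (pa i) (pb i); omega
          have := ivtB x₁ (pa j) (pa i) (pb i) (by simp; omega) (by simp) hc1
          have hAD' : cB x₁ (pa j) (pa i) = 0 := by rw [hpa]; exact hAD
          omega


/-! ### total crossing number -/

def Lc (m : CM n) : ℕ := ∑ s : Fin n, ∑ t : Fin n, m.c s t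

lemma dd_sum (y : Fin n) : ∑ t : Fin n, dd t y = 1 := by
  simp [dd, Finset.sum_ite_eq']

lemma Lc_mul (a b : CM n) : Lc (a * b) = Lc a + Lc b := by
  simp only [Lc, CM.mul_c, Finset.sum_add_distrib]
  congr 1
  have inner : ∀ s : Fin n, ∑ t : Fin n, b.c s ((a.ρ⁻¹) t) = ∑ t : Fin n, b.c s t :=
    fun s => Equiv.sum_comp (a.ρ⁻¹) (b.c s)
  calc ∑ s : Fin n, ∑ t : Fin n, b.c ((a.ρ⁻¹) s) ((a.ρ⁻¹) t)
      = ∑ s : Fin n, ∑ t : Fin n, b.c ((a.ρ⁻¹) s) t := by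
        refine Finset.sum_congr rfl fun s _ => inner _
    _ = ∑ s : Fin n, ∑ t : Fin n, b.c s t :=
        Equiv.sum_comp (a.ρ⁻¹) (fun s => ∑ t : Fin n, b.c s t)

lemma Lc_gen (i : Fin (n-1)) : Lc (gen i) = 2 := by
  have h : ∀ y z : Fin n, ∑ s : Fin n, ∑ t : Fin n, dd s y * dd t z = 1 := by
    intro y z
    have : ∀ s : Fin n, ∑ t : Fin n, dd s y * dd t z = dd s y := by
      intro s; rw [← Finset.mul_sum, dd_sum, mul_one]
    rw [Finset.sum_congr rfl fun s _ => this s, dd_sum]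
  have : Lc (gen i) = (∑ s : Fin n, ∑ t : Fin n, dd s (pa i) * dd t (pb i))
      + ∑ s : Fin n, ∑ t : Fin n, dd s (pb i) * dd t (pa i) := by
    simp only [Lc, gen_c, genc, Finset.sum_add_distrib]
  rw [this, h, h]

lemma Lc_one : Lc (1 : CM n) = 0 := by simp [Lc, CM.one_c]

lemma Lc_phi (x : BraidMonoid n) : Lc (phi n x) = 2 * lenB x := by
  obtain ⟨l, rfl⟩ := exists_word x
  induction l with
  | nil =>
      show Lc (phi n 1) = 2 * lenB (1 : BraidMonoid n)
      rw [map_one, Lc_one, lenB_one]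
  | cons k l ih =>
      rw [wb_cons, map_mul, phi_of, Lc_mul, Lc_gen, ih, lenB_mul, lenB_σB]
      ring

lemma eq_one_of_ρB_one {y : BraidMonoid n} (hy : SFB y) (h : ρB y = 1) : y = 1 := by
  have hc : ∀ s t, cB y s t = 0 := by
    intro s t
    have h2 := cB_eq_indb hy s t
    rw [h, indb] at h2
    simp only [inv_one, Equiv.Perm.one_apply] at h2
    rw [if_neg (by omega)] at h2
    exact h2
  have hL : Lc (phi n y) = 0 := by
    simp only [Lc]
    refine Finset.sum_eq_zero fun s _ => Finset.sum_eq_zero fun t _ => hc s t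
  rw [Lc_phi] at hL
  exact lenB_eq_zero (by omega)

/-! ### monotone permutations -/

lemma adj_lt (π : Equiv.Perm (Fin n))
    (hadj : ∀ i : Fin (n-1), (π (pa i)).val < (π (pb i)).val) :
    ∀ a b : Fin n, b.val = a.val + 1 → (π a).val < (π b).val := by
  intro a b hb
  have ha : a.val < n - 1 := by have := b.isLt; omega
  have e1 : a = pa ⟨a.val, ha⟩ := Fin.ext rfl
  have e2 : b = pb ⟨a.val, ha⟩ := Fin.ext (by simp; omega)
  rw [e1, e2]; exact hadj _

lemma chain_lt (π : Equiv.Perm (Fin n))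
    (hadj : ∀ i : Fin (n-1), (π (pa i)).val < (π (pb i)).val) :
    ∀ (d : ℕ) (a b : Fin n), b.val = a.val + d + 1 → (π a).val < (π b).val := by
  intro d
  induction d with
  | zero => exact fun a b hb => adj_lt π hadj a b (by omega)
  | succ d ih =>
      intro a b hb
      have hc : a.val + 1 < n := by have := b.isLt; omega
      have h1 := adj_lt π hadj a ⟨a.val + 1, hc⟩ rfl
      have h2 := ih ⟨a.val + 1, hc⟩ b (by simp; omega)
      omega

lemma perm_mono_eq_one (π : Equiv.Perm (Fin n))
    (h : ∀ a b : Fin n, a.val < b.val → (π a).val < (π b).val) : π = 1 := by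
  have hsm : StrictMono ⇑π := fun a b hab => h a b hab
  have hid : StrictMono (id : Fin n → Fin n) := fun a b hab => hab
  have hr : Set.range ⇑π = Set.range (id : Fin n → Fin n) := by
    rw [Set.range_id]
    exact Set.range_eq_univ.mpr π.surjective
  have := (hsm.range_inj hid).mp hr
  exact Equiv.ext fun x => congrFun this x

lemma exists_descentL (ρ : Equiv.Perm (Fin n)) (h : ρ ≠ 1) :
    ∃ i : Fin (n-1), indb ρ (pa i) (pb i) = 1 := by
  by_contra hno
  push_neg at hno
  apply h
  have hadj : ∀ i : Fin (n-1), (ρ⁻¹ (pa i)).val < (ρ⁻¹ (pb i)).val := by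
    intro i
    have hne : (ρ⁻¹ (pa i)).val ≠ (ρ⁻¹ (pb i)).val := by
      intro hv
      have h2 := congrArg Fin.val ((ρ⁻¹).injective (Fin.ext hv))
      simp at h2
    by_contra hge
    exact hno i (by rw [indb, if_pos (Or.inl ⟨by simp, by omega⟩)])
  have h2 : ∀ a b : Fin n, a.val < b.val → (ρ⁻¹ a).val < (ρ⁻¹ b).val := by
    intro a b hab
    exact chain_lt ρ⁻¹ hadj (b.val - a.val - 1) a b (by omega)
  have h3 : ρ⁻¹ = 1 := perm_mono_eq_one ρ⁻¹ h2
  exact inv_eq_one.mp h3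

/-! ### uniqueness of square-free braids with a given permutation -/

lemma uniq : ∀ (N : ℕ) (x y : BraidMonoid n), lenB x ≤ N → SFB x → SFB y →
    ρB x = ρB y → x = y := by
  intro N
  induction N with
  | zero =>
      intro x y hlen hx hy hρ
      have hx1 : x = 1 := lenB_eq_zero (by omega)
      subst hx1
      have hρ1 : ρB y = 1 := by rw [← hρ, ρB_one]
      rw [eq_one_of_ρB_one hy hρ1]
  | succ N IHN =>
      intro x y hlen hx hy hρ
      by_cases h1 : ρB x = 1
      · rw [eq_one_of_ρB_one hx h1, eq_one_of_ρB_one hy (by rw [← hρ]; exact h1)]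
      · obtain ⟨i, hdes⟩ := exists_descentL (ρB x) h1
        have hcx : 1 ≤ cB x (pa i) (pb i) := by rw [cB_eq_indb hx, hdes]
        have hcy : 1 ≤ cB y (pa i) (pb i) := by rw [cB_eq_indb hy, ← hρ, hdes]
        obtain ⟨x', hxeq⟩ := keyLemma (lenB x) x le_rfl hx i hcx
        obtain ⟨y', hyeq⟩ := keyLemma (lenB y) y le_rfl hy i hcy
        subst hxeq; subst hyeq
        have hx' := SFB_of_gen_mul hx
        have hy' := SFB_of_gen_mul hy
        have hρ' : ρB x' = ρB y' := by
          rw [ρB_gen_mul, ρB_gen_mul] at hρ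
          exact mul_left_cancel hρ
        have hlen' : lenB x' ≤ N := by rw [lenB_mul, lenB_σB] at hlen; omega
        rw [IHN x' y' hlen' hx' hy' hρ']


/-! ### existence of a square-free braid with a given permutation -/

lemma sw_sq (i : Fin (n-1)) : sw i * sw i = 1 := by
  rw [sw]; exact Equiv.swap_mul_self _ _

lemma genc_sw_sw (i : Fin (n-1)) (u v : Fin n) :
    genc i ((sw i) u) ((sw i) v) = genc i u v := by
  simp only [genc, dd_sw, sw_pa, sw_pb]
  ring

lemma hdes_val {i : Fin (n-1)} {ρ : Equiv.Perm (Fin n)}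
    (hdes : indb ρ (pa i) (pb i) = 1) : (ρ⁻¹ (pb i)).val < (ρ⁻¹ (pa i)).val := by
  by_contra hge
  rw [indb, if_neg (by simp only [pa_val, pb_val]; omega)] at hdes
  exact absurd hdes (by omega)

lemma indb_descent_step (i : Fin (n-1)) (ρ : Equiv.Perm (Fin n))
    (hdes : indb ρ (pa i) (pb i) = 1) (u v : Fin n) :
    indb (sw i * ρ) u v + genc i u v = indb ρ ((sw i) u) ((sw i) v) := by
  have hinv : ∀ w, (sw i * ρ)⁻¹ w = ρ⁻¹ ((sw i) w) := by
    intro w; rw [mul_inv_rev, Equiv.Perm.mul_apply, sw_inv]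
  have hpar := indb_gen i ρ u v
  have l1 := indb_le_one (sw i * ρ) u v
  have l2 := indb_le_one ρ ((sw i) u) ((sw i) v)
  have hdes0 := hdes_val hdes
  by_cases hz : genc i u v = 0
  · omega
  · have h1 : (u.val = i.val ∧ v.val = i.val + 1) ∨ (u.val = i.val + 1 ∧ v.val = i.val) := by
      by_contra hc; exact hz (by rw [genc_val, if_neg hc])
    have hcase : (u = pa i ∧ v = pb i) ∨ (u = pb i ∧ v = pa i) := by
      rcases h1 with ⟨h1, h2⟩ | ⟨h1, h2⟩
      · exact Or.inl ⟨Fin.ext h1, Fin.ext h2⟩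
      · exact Or.inr ⟨Fin.ext h1, Fin.ext h2⟩
    have hgv : genc i (pa i) (pb i) = 1 := by simp [genc_val]
    have hgv2 : genc i (pb i) (pa i) = 1 := by rw [genc_symm]; exact hgv
    rcases hcase with ⟨rfl, rfl⟩ | ⟨rfl, rfl⟩
    · have e1 : indb (sw i * ρ) (pa i) (pb i) = 0 := by
        rw [indb, if_neg]
        rw [hinv, hinv, sw_pa, sw_pb]
        intro hcnd
        rcases hcnd with ⟨_, hlt⟩ | ⟨hlt, _⟩
        · omega
        · simp at hlt
      have e2 : indb ρ ((sw i) (pa i)) ((sw i) (pb i)) = 1 := by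
        rw [sw_pa, sw_pb, indb_symm]; exact hdes
      rw [e1, e2, hgv]
    · have e1 : indb (sw i * ρ) (pb i) (pa i) = 0 := by
        rw [indb, if_neg]
        rw [hinv, hinv, sw_pa, sw_pb]
        intro hcnd
        rcases hcnd with ⟨hlt, _⟩ | ⟨_, hlt⟩
        · simp at hlt
        · omega
      have e2 : indb ρ ((sw i) (pb i)) ((sw i) (pa i)) = 1 := by
        rw [sw_pa, sw_pb, indb_symm]
        rw [indb_symm]; exact hdes
      rw [e1, e2, hgv2]

def NI (ρ : Equiv.Perm (Fin n)) : ℕ := ∑ s : Fin n, ∑ t : Fin n, indb ρ s t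

lemma sum_genc (i : Fin (n-1)) : ∑ s : Fin n, ∑ t : Fin n, genc i s t = 2 := by
  have := Lc_gen i
  simp only [Lc, gen_c] at this
  exact this

lemma sum_sw_sw (i : Fin (n-1)) (f : Fin n → Fin n → ℕ) :
    ∑ s : Fin n, ∑ t : Fin n, f ((sw i) s) ((sw i) t) = ∑ s : Fin n, ∑ t : Fin n, f s t := by
  have inner : ∀ s : Fin n, ∑ t : Fin n, f s ((sw i) t) = ∑ t : Fin n, f s t :=
    fun s => Equiv.sum_comp (sw i) (f s)
  calc ∑ s : Fin n, ∑ t : Fin n, f ((sw i) s) ((sw i) t)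
      = ∑ s : Fin n, ∑ t : Fin n, f ((sw i) s) t :=
        Finset.sum_congr rfl fun s _ => inner _
    _ = ∑ s : Fin n, ∑ t : Fin n, f s t := Equiv.sum_comp (sw i) (fun s => ∑ t, f s t)

lemma indb_single_le (ρ : Equiv.Perm (Fin n)) (s t : Fin n) : indb ρ s t ≤ NI ρ := by
  have h1 : indb ρ s t ≤ ∑ v : Fin n, indb ρ s v :=
    Finset.single_le_sum (fun _ _ => Nat.zero_le _) (Finset.mem_univ t)
  have h2 : ∑ v : Fin n, indb ρ s v ≤ NI ρ :=
    Finset.single_le_sum (f := fun u => ∑ v : Fin n, indb ρ u v)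
      (fun _ _ => Nat.zero_le _) (Finset.mem_univ s)
  omega

lemma exists_sf : ∀ (N : ℕ) (ρ : Equiv.Perm (Fin n)), NI ρ ≤ N →
    ∃ x : BraidMonoid n, ρB x = ρ ∧ SFB x := by
  intro N
  induction N with
  | zero =>
      intro ρ hN
      by_cases hρ1 : ρ = 1
      · exact ⟨1, by rw [ρB_one, hρ1], SFB_one⟩
      · obtain ⟨i, hdes⟩ := exists_descentL ρ hρ1
        have := indb_single_le ρ (pa i) (pb i)
        omega
  | succ N IH =>
      intro ρ hN
      by_cases hρ1 : ρ = 1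
      · exact ⟨1, by rw [ρB_one, hρ1], SFB_one⟩
      · obtain ⟨i, hdes⟩ := exists_descentL ρ hρ1
        have step := indb_descent_step i ρ hdes
        have hsum : NI (sw i * ρ) + 2 = NI ρ := by
          have h1 : ∑ s : Fin n, ∑ t : Fin n, (indb (sw i * ρ) s t + genc i s t)
              = ∑ s : Fin n, ∑ t : Fin n, indb ρ ((sw i) s) ((sw i) t) := by
            refine Finset.sum_congr rfl fun s _ => Finset.sum_congr rfl fun t _ => step s t
          rw [sum_sw_sw i (indb ρ)] at h1
          simp only [Finset.sum_add_distrib] at h1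
          rw [sum_genc] at h1
          exact h1
        obtain ⟨x', hρ', hsf'⟩ := IH (sw i * ρ) (by omega)
        refine ⟨σB i * x', ?_, ?_⟩
        · rw [ρB_gen_mul, hρ', ← mul_assoc, sw_sq, one_mul]
        · intro u v
          have hc : cB (σB i * x') u v = genc i u v + indb (sw i * ρ) ((sw i) u) ((sw i) v) := by
            rw [cB_gen_mul, cB_eq_indb hsf', hρ']
          have hstep := step ((sw i) u) ((sw i) v)
          rw [sw_sw, sw_sw, genc_sw_sw] at hstep
          have := indb_le_one ρ u v
          omega


/-! ### the fundamental braid -/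

def SW (n : ℕ) (t : ℕ) : Equiv.Perm (Fin n) := if h : t < n - 1 then sw ⟨t, h⟩ else 1

lemma ρB_σB (i : Fin (n-1)) : ρB (σB i) = sw i := rfl

lemma ρB_σM (t : ℕ) : ρB (σM n t) = SW n t := by
  by_cases h : t < n - 1 <;> simp [σM, SW, h, ρB_σB]

lemma ρB_list_prod (l : List (BraidMonoid n)) : ρB l.prod = (l.map ρB).prod := by
  induction l with
  | nil => simp [ρB_one]
  | cons a l ih => rw [List.prod_cons, ρB_mul, ih, List.map_cons, List.prod_cons]

lemma lenB_list_prod (l : List (BraidMonoid n)) : lenB l.prod = (l.map lenB).sum := by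
  induction l with
  | nil => simp
  | cons a l ih => rw [List.prod_cons, lenB_mul, ih, List.map_cons, List.sum_cons]

def blockB (n : ℕ) (j : ℕ) : BraidMonoid n := ((List.range (j + 1)).map (σM n)).prod

def blockPerm (n : ℕ) (j : ℕ) : Equiv.Perm (Fin n) := ((List.range (j + 1)).map (SW n)).prod

lemma ρB_blockB (j : ℕ) : ρB (blockB n j) = blockPerm n j := by
  rw [blockB, blockPerm, ρB_list_prod, List.map_map]
  congr 1
  exact List.map_congr_left fun t _ => ρB_σM t

lemma blockPerm_val : ∀ (j : ℕ), j < n - 1 → ∀ x : Fin n,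
    ((blockPerm n j) x).val =
      if x.val = j + 1 then 0 else if x.val ≤ j then x.val + 1 else x.val := by
  intro j
  induction j with
  | zero =>
      intro hj x
      have hx := x.isLt
      rw [blockPerm]
      have hr1 : List.range 1 = [0] := rfl
      rw [hr1, List.map_cons, List.map_nil, List.prod_cons, List.prod_nil, mul_one]
      rw [SW, dif_pos hj, sw_val]
      have hv : (⟨0, hj⟩ : Fin (n-1)).val = 0 := rfl
      rw [hv]
      split_ifs <;> omega
  | succ j ih =>
      intro hj x
      have hx := x.isLt
      have hj' : j < n - 1 := by omega
      have hstep : blockPerm n (j+1) = blockPerm n j * SW n (j+1) := by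
        rw [blockPerm, blockPerm, List.range_succ, List.map_append, List.prod_append,
          List.map_singleton, List.prod_singleton]
      rw [hstep, Equiv.Perm.mul_apply]
      have h1 : ((SW n (j+1)) x).val
          = if x.val = j + 1 then j + 2 else if x.val = j + 2 then j + 1 else x.val := by
        rw [SW, dif_pos hj, sw_val]
      have h2 := ih hj' ((SW n (j+1)) x)
      rw [h1] at h2
      rw [h2]
      split_ifs <;> omega

def Rm (n : ℕ) (m : ℕ) : Equiv.Perm (Fin n) := (((List.range m).reverse).map (blockPerm n)).prod

lemma Rm_val : ∀ (m : ℕ), m ≤ n - 1 → ∀ x : Fin n,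
    ((Rm n m) x).val = if x.val ≤ m then m - x.val else x.val := by
  intro m
  induction m with
  | zero =>
      intro _ x
      rw [Rm]
      simp only [List.range_zero, List.reverse_nil, List.map_nil, List.prod_nil,
        Equiv.Perm.one_apply]
      split_ifs <;> omega
  | succ m ih =>
      intro hm x
      have hx := x.isLt
      have hstep : Rm n (m+1) = blockPerm n m * Rm n m := by
        rw [Rm, Rm, List.range_succ, List.reverse_append, List.reverse_singleton,
          List.singleton_append, List.map_cons, List.prod_cons]
      rw [hstep, Equiv.Perm.mul_apply]
      have h2 := ih (by omega) x
      have h1 := blockPerm_val m (by omega) ((Rm n m) x)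
      rw [h2] at h1
      rw [h1]
      split_ifs <;> omega

lemma ρB_ΔM : ρB (ΔM n) = Rm n (n - 1) := by
  rw [ΔM, Rm, ρB_list_prod, List.map_map]
  congr 1
  exact List.map_congr_left fun j _ => ρB_blockB j

lemma ρB_ΔM_val (x : Fin n) : ((ρB (ΔM n)) x).val = n - 1 - x.val := by
  rw [ρB_ΔM, Rm_val (n-1) le_rfl x, if_pos (by have := x.isLt; omega)]

theorem Equiv.Perm.apply_inv_self {α : Type*} (f : Equiv.Perm α) (x : α) : f (f⁻¹ x) = x :=
  f.apply_symm_apply x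

theorem Equiv.Perm.inv_apply_self {α : Type*} (f : Equiv.Perm α) (x : α) : f⁻¹ (f x) = x :=
  f.symm_apply_apply x

lemma ρB_ΔM_inv_val (x : Fin n) : (((ρB (ΔM n))⁻¹) x).val = n - 1 - x.val := by
  set r := ρB (ΔM n)
  have hrr : ∀ y : Fin n, r (r y) = y := by
    intro y
    refine Fin.ext ?_
    rw [ρB_ΔM_val, ρB_ΔM_val]
    have := y.isLt; omega
  have h4 : r⁻¹ x = r x := by
    have h1 : r (r⁻¹ x) = r (r x) := by rw [Equiv.Perm.apply_inv_self, hrr]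
    exact r.injective h1
  rw [h4, ρB_ΔM_val]

def od (s t : Fin n) : ℕ := if s = t then 0 else 1

lemma indb_diag (ρ : Equiv.Perm (Fin n)) (s : Fin n) : indb ρ s s = 0 := by
  rw [indb, if_neg (by omega)]

lemma indb_le_od (ρ : Equiv.Perm (Fin n)) (s t : Fin n) : indb ρ s t ≤ od s t := by
  rcases eq_or_ne s t with rfl | h
  · rw [indb_diag, od, if_pos rfl]
  · rw [od, if_neg h]; exact indb_le_one ρ s t

lemma indb_ΔM (s t : Fin n) : indb (ρB (ΔM n)) s t = od s t := by
  rcases eq_or_ne s t with rfl | h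
  · rw [indb_diag, od, if_pos rfl]
  · have hv : s.val ≠ t.val := fun hh => h (Fin.ext hh)
    have hs := s.isLt; have ht := t.isLt
    rw [od, if_neg h, indb, ρB_ΔM_inv_val, ρB_ΔM_inv_val, if_pos (by omega)]

lemma sum_od : ∑ s : Fin n, ∑ t : Fin n, od s t = n * (n - 1) := by
  have inner : ∀ s : Fin n, ∑ t : Fin n, od s t = n - 1 := by
    intro s
    have h1 : ∀ t : Fin n, od s t + dd t s = 1 := by
      intro t
      rcases eq_or_ne s t with rfl | h
      · rw [od, if_pos rfl, dd, if_pos rfl]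
      · rw [od, if_neg h, dd, if_neg (Ne.symm h)]
    have h2 : ∑ t : Fin n, (od s t + dd t s) = n := by
      rw [Finset.sum_congr rfl fun t _ => h1 t]
      simp
    rw [Finset.sum_add_distrib, dd_sum s] at h2
    omega
  rw [Finset.sum_congr rfl fun s _ => inner s]
  simp [Finset.sum_const, mul_comm]

lemma NI_le (ρ : Equiv.Perm (Fin n)) : NI ρ ≤ n * (n - 1) := by
  rw [← sum_od]
  exact Finset.sum_le_sum fun s _ => Finset.sum_le_sum fun t _ => indb_le_od ρ s t

lemma NI_ΔM : NI (ρB (ΔM n)) = n * (n - 1) := by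
  rw [NI, Finset.sum_congr rfl fun s _ => Finset.sum_congr rfl fun t _ => indb_ΔM s t, sum_od]

lemma sum_map_one {α : Type*} (l : List α) : (l.map (fun _ => (1:ℕ))).sum = l.length := by
  induction l with
  | nil => rfl
  | cons a l ih => rw [List.map_cons, List.sum_cons, ih, List.length_cons]; omega

lemma lenB_blockB {j : ℕ} (hj : j < n - 1) : lenB (blockB n j) = j + 1 := by
  rw [blockB, lenB_list_prod, List.map_map]
  have h1 : ∀ t ∈ List.range (j + 1), (lenB ∘ σM n) t = 1 := by
    intro t ht
    rw [List.mem_range] at ht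
    have htn : t < n - 1 := by omega
    show lenB (σM n t) = 1
    rw [σM, dif_pos htn]
    exact lenB_σB _
  rw [List.map_congr_left h1, sum_map_one, List.length_range]

lemma gauss : ∀ m : ℕ, 2 * ((List.range m).map (fun j => j + 1)).sum = m * (m + 1) := by
  intro m
  induction m with
  | zero => rfl
  | succ m ih =>
      rw [List.range_succ, List.map_append, List.sum_append]
      simp only [List.map_cons, List.map_nil, List.sum_cons, List.sum_nil]
      have h2 : (m + 1) * (m + 1 + 1) = m * (m + 1) + 2 * (m + 1) := by ring
      omega

lemma lenB_ΔM_twice : 2 * lenB (ΔM n) = n * (n - 1) := by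
  have h1 : lenB (ΔM n) = ((List.range (n-1)).map (fun j => j + 1)).sum := by
    rw [ΔM, lenB_list_prod, List.map_map, List.map_reverse, List.sum_reverse]
    congr 1
    refine List.map_congr_left fun j hj => ?_
    rw [List.mem_range] at hj
    exact lenB_blockB hj
  rw [h1, gauss]
  cases n with
  | zero => rfl
  | succ m => simp [mul_comm]

lemma indb_le_cB (x : BraidMonoid n) (s t : Fin n) : indb (ρB x) s t ≤ cB x s t := by
  have h1 := cB_parity x s t
  have h2 := indb_le_one (ρB x) s t
  omega

lemma double_sum_eq_of_le {f g : Fin n → Fin n → ℕ} (hle : ∀ s t, f s t ≤ g s t)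
    (hsum : ∑ s : Fin n, ∑ t : Fin n, f s t = ∑ s : Fin n, ∑ t : Fin n, g s t) :
    ∀ s t, f s t = g s t := by
  have houter := (Finset.sum_eq_sum_iff_of_le
    (fun s (_ : s ∈ Finset.univ) => Finset.sum_le_sum fun t _ => hle s t)).mp hsum
  intro s t
  have hinner := (Finset.sum_eq_sum_iff_of_le (fun t (_ : t ∈ Finset.univ) => hle s t)).mp
    (houter s (Finset.mem_univ s))
  exact hinner t (Finset.mem_univ t)

lemma Lc_cB (x : BraidMonoid n) : Lc (phi n x) = ∑ s : Fin n, ∑ t : Fin n, cB x s t := rfl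

lemma cB_ΔM (s t : Fin n) : cB (ΔM n) s t = od s t := by
  have h1 : ∀ u v, indb (ρB (ΔM n)) u v = cB (ΔM n) u v := by
    refine double_sum_eq_of_le (fun u v => indb_le_cB _ u v) ?_
    rw [← Lc_cB]
    show NI (ρB (ΔM n)) = Lc (phi n (ΔM n))
    rw [NI_ΔM, Lc_phi, lenB_ΔM_twice]
  rw [← h1, indb_ΔM]

lemma SFB_ΔM : SFB (ΔM n) := by
  intro s t
  rw [cB_ΔM, od]
  split_ifs <;> omega

lemma SFB_of_dvd {x z : BraidMonoid n} (h : x * z = ΔM n) : SFB x := by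
  intro s t
  have h2 := SFB_ΔM (n := n) s t
  rw [← h, cB_mul] at h2
  omega

/-! ### square-free braids divide Δ -/

lemma Lc_eq_NI {x : BraidMonoid n} (hsf : SFB x) : Lc (phi n x) = NI (ρB x) := by
  rw [Lc_cB, NI]
  exact Finset.sum_congr rfl fun s _ => Finset.sum_congr rfl fun t _ => cB_eq_indb hsf s t

lemma inv_anti {ρ : Equiv.Perm (Fin n)}
    (h : ∀ a b : Fin n, a.val < b.val → (ρ b).val < (ρ a).val) :
    ∀ a b : Fin n, a.val < b.val → (ρ⁻¹ b).val < (ρ⁻¹ a).val := by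
  intro a b hab
  rcases Nat.lt_trichotomy ((ρ⁻¹ b)).val ((ρ⁻¹ a)).val with h1 | h1 | h1
  · exact h1
  · exfalso
    have h2 : ρ⁻¹ b = ρ⁻¹ a := Fin.ext h1
    have h3 : b = a := ρ⁻¹.injective h2
    omega
  · exfalso
    have h2 := h (ρ⁻¹ a) (ρ⁻¹ b) h1
    rw [Equiv.Perm.apply_inv_self, Equiv.Perm.apply_inv_self] at h2
    omega

lemma perm_anti_unique {ρ1 ρ2 : Equiv.Perm (Fin n)}
    (h1 : ∀ a b : Fin n, a.val < b.val → (ρ1⁻¹ b).val < (ρ1⁻¹ a).val)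
    (h2 : ∀ a b : Fin n, a.val < b.val → (ρ2⁻¹ b).val < (ρ2⁻¹ a).val) : ρ1 = ρ2 := by
  have h2' : ∀ a b : Fin n, a.val < b.val → (ρ2 b).val < (ρ2 a).val := by
    have h3 := inv_anti (ρ := ρ2⁻¹) h2
    simpa using h3
  have hmono : ∀ a b : Fin n, a.val < b.val → ((ρ1⁻¹ * ρ2) a).val < ((ρ1⁻¹ * ρ2) b).val := by
    intro a b hab
    have hr := h2' a b hab
    have h4 := h1 (ρ2 b) (ρ2 a) hr
    simpa [Equiv.Perm.mul_apply] using h4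
  have h5 := perm_mono_eq_one (ρ1⁻¹ * ρ2) hmono
  exact (inv_mul_eq_one.mp h5)

lemma anti_of_indb_one {ρ : Equiv.Perm (Fin n)}
    (h : ∀ s t : Fin n, s.val ≠ t.val → indb ρ s t = 1) :
    ∀ a b : Fin n, a.val < b.val → (ρ⁻¹ b).val < (ρ⁻¹ a).val := by
  intro a b hab
  have h1 := h a b (by omega)
  rw [indb] at h1
  by_contra hge
  rw [if_neg (by omega)] at h1
  omega

lemma indb_all_of_NI_max {ρ : Equiv.Perm (Fin n)} (hNI : NI ρ = n * (n - 1)) :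
    ∀ s t : Fin n, s.val ≠ t.val → indb ρ s t = 1 := by
  have hall := double_sum_eq_of_le (f := indb ρ) (g := od)
    (fun s t => indb_le_od ρ s t) (by rw [← NI, hNI, sum_od])
  intro s t hst
  rw [hall s t, od, if_neg (fun hh => hst (by rw [hh]))]

lemma cB_σB_eq (i : Fin (n-1)) (s t : Fin n) : cB (σB i) s t = genc i s t := rfl

lemma genc_le_one (i : Fin (n-1)) (s t : Fin n) : genc i s t ≤ 1 := by
  rw [genc_val]; split_ifs <;> omega

lemma dvd_of_max {x : BraidMonoid n} (hsf : SFB x) (hmax : 2 * lenB x = n * (n - 1)) :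
    x = ΔM n := by
  have hNIx : NI (ρB x) = n * (n - 1) := by
    rw [← Lc_eq_NI hsf, Lc_phi, hmax]
  have h1 := indb_all_of_NI_max hNIx
  have h2 := indb_all_of_NI_max (NI_ΔM (n := n))
  have hρ : ρB x = ρB (ΔM n) := perm_anti_unique (anti_of_indb_one h1) (anti_of_indb_one h2)
  exact uniq (lenB x) x (ΔM n) le_rfl hsf SFB_ΔM hρ

lemma chain_anti (ρ : Equiv.Perm (Fin n))
    (hadj : ∀ i : Fin (n-1), (ρ (pb i)).val < (ρ (pa i)).val) :
    ∀ a b : Fin n, a.val < b.val → (ρ b).val < (ρ a).val := by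
  have hadj2 : ∀ a b : Fin n, b.val = a.val + 1 → (ρ b).val < (ρ a).val := by
    intro a b hb
    have ha : a.val < n - 1 := by have := b.isLt; omega
    have e1 : a = pa ⟨a.val, ha⟩ := Fin.ext rfl
    have e2 : b = pb ⟨a.val, ha⟩ := Fin.ext (by simp; omega)
    rw [e1, e2]; exact hadj _
  have hchain : ∀ (d : ℕ) (a b : Fin n), b.val = a.val + d + 1 → (ρ b).val < (ρ a).val := by
    intro d
    induction d with
    | zero => exact fun a b hb => hadj2 a b (by omega)
    | succ d ih =>
        intro a b hb
        have hc : a.val + 1 < n := by have := b.isLt; omega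
        have k1 := hadj2 a ⟨a.val + 1, hc⟩ rfl
        have k2 := ih ⟨a.val + 1, hc⟩ b (by simp; omega)
        omega
  intro a b hab
  exact hchain (b.val - a.val - 1) a b (by omega)

lemma sf_dvd_step {x : BraidMonoid n} (hsf : SFB x) (hne : 2 * lenB x ≠ n * (n - 1)) :
    ∃ i : Fin (n-1), SFB (x * σB i) := by
  have hex : ∃ i : Fin (n-1), ¬(((ρB x) (pb i)).val < ((ρB x) (pa i)).val) := by
    by_contra hall
    push_neg at hall
    have hanti := chain_anti (ρB x) hall
    have hinv := inv_anti hanti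
    have hallind : ∀ s t : Fin n, indb (ρB x) s t = od s t := by
      intro s t
      rcases eq_or_ne s t with rfl | hst
      · rw [indb_diag, od, if_pos rfl]
      · have hv : s.val ≠ t.val := fun hh => hst (Fin.ext hh)
        rw [od, if_neg hst]
        rcases Nat.lt_or_ge s.val t.val with hlt | hge
        · rw [indb, if_pos (Or.inl ⟨hlt, hinv s t hlt⟩)]
        · have hlt : t.val < s.val := by omega
          rw [indb, if_pos (Or.inr ⟨hlt, hinv t s hlt⟩)]
    apply hne
    rw [← Lc_phi, Lc_eq_NI hsf, NI,
      Finset.sum_congr rfl fun s _ => Finset.sum_congr rfl fun t _ => hallind s t, sum_od]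
  obtain ⟨i, hnot⟩ := hex
  have hzero : cB x ((ρB x) (pa i)) ((ρB x) (pb i)) = 0 := by
    rw [cB_eq_indb hsf, indb, if_neg]
    rw [Equiv.Perm.inv_apply_self, Equiv.Perm.inv_apply_self]
    intro hcnd
    rcases hcnd with ⟨_, hlt2⟩ | ⟨hlt1, _⟩
    · simp at hlt2
    · exact hnot hlt1
  refine ⟨i, ?_⟩
  intro s t
  rw [cB_mul, cB_σB_eq]
  by_cases hg : genc i ((ρB x)⁻¹ s) ((ρB x)⁻¹ t) = 0
  · rw [hg]; have := hsf s t; omega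
  · have h1 : (((ρB x)⁻¹ s).val = i.val ∧ ((ρB x)⁻¹ t).val = i.val + 1) ∨
        (((ρB x)⁻¹ s).val = i.val + 1 ∧ ((ρB x)⁻¹ t).val = i.val) := by
      by_contra hc; exact hg (by rw [genc_val, if_neg hc])
    have hgle := genc_le_one i ((ρB x)⁻¹ s) ((ρB x)⁻¹ t)
    rcases h1 with ⟨ha, hb⟩ | ⟨ha, hb⟩
    · have hs : (ρB x) (pa i) = s := by
        have h2 : (ρB x)⁻¹ s = pa i := Fin.ext ha
        rw [← h2, Equiv.Perm.apply_inv_self]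
      have ht : (ρB x) (pb i) = t := by
        have h2 : (ρB x)⁻¹ t = pb i := Fin.ext hb
        rw [← h2, Equiv.Perm.apply_inv_self]
      have hz2 : cB x s t = 0 := by rw [← hs, ← ht]; exact hzero
      omega
    · have hs : (ρB x) (pb i) = s := by
        have h2 : (ρB x)⁻¹ s = pb i := Fin.ext ha
        rw [← h2, Equiv.Perm.apply_inv_self]
      have ht : (ρB x) (pa i) = t := by
        have h2 : (ρB x)⁻¹ t = pa i := Fin.ext hb
        rw [← h2, Equiv.Perm.apply_inv_self]
      have hz2 : cB x s t = 0 := by rw [← hs, ← ht, cB_symm]; exact hzero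
      omega

lemma sf_dvd : ∀ (N : ℕ) (x : BraidMonoid n), SFB x → n * (n - 1) - 2 * lenB x ≤ N →
    ∃ z, x * z = ΔM n := by
  intro N
  induction N with
  | zero =>
      intro x hsf hN
      have hle : 2 * lenB x ≤ n * (n - 1) := by
        rw [← Lc_phi, Lc_eq_NI hsf]; exact NI_le _
      have hmax : 2 * lenB x = n * (n - 1) := by omega
      exact ⟨1, by rw [mul_one]; exact dvd_of_max hsf hmax⟩
  | succ N IH =>
      intro x hsf hN
      have hle : 2 * lenB x ≤ n * (n - 1) := by
        rw [← Lc_phi, Lc_eq_NI hsf]; exact NI_le _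
      by_cases hmax : 2 * lenB x = n * (n - 1)
      · exact ⟨1, by rw [mul_one]; exact dvd_of_max hsf hmax⟩
      · obtain ⟨i, hsf1⟩ := sf_dvd_step hsf hmax
        have hlen1 : lenB (x * σB i) = lenB x + 1 := by
          rw [lenB_mul, lenB_σB]
        obtain ⟨z', hz'⟩ := IH (x * σB i) hsf1 (by omega)
        exact ⟨σB i * z', by rw [← mul_assoc]; exact hz'⟩


/-! ### the quotient homomorphism -/

def rhoHom (n : ℕ) : BraidMonoid n →* Equiv.Perm (Fin n) where
  toFun := ρB
  map_one' := ρB_one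
  map_mul' := ρB_mul

lemma rhoHom_spec (n : ℕ) : ∀ i : Fin (n - 1),
    rhoHom n (PresentedMonoid.of (braidRelsMon n) i) =
      Equiv.swap ⟨i, by omega⟩ ⟨i + 1, by omega⟩ := by
  intro i
  exact ρB_σB i

lemma permQuot_spec (n : ℕ) : ∀ i : Fin (n - 1),
    permQuot n (PresentedMonoid.of (braidRelsMon n) i) =
      Equiv.swap ⟨i, by omega⟩ ⟨i + 1, by omega⟩ := by
  exact Classical.epsilon_spec (p := fun f : BraidMonoid n →* Equiv.Perm (Fin n) =>
    ∀ i : Fin (n - 1), f (PresentedMonoid.of (braidRelsMon n) i) =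
      Equiv.swap ⟨i, by omega⟩ ⟨i + 1, by omega⟩) ⟨rhoHom n, rhoHom_spec n⟩

lemma permQuot_eq (n : ℕ) : permQuot n = rhoHom n := by
  refine PresentedMonoid.ext (braidRelsMon n) fun i => ?_
  rw [permQuot_spec n i, rhoHom_spec n i]

lemma permQuot_apply (x : BraidMonoid n) : permQuot n x = ρB x := by
  rw [permQuot_eq]; rfl


/-- the restriction of `q : B_n^+ → Σ_n` to the permutation braids
is a bijection onto the symmetric group `Σ_n`. -/
theorem permQuot_bijOn_permBraids (n : ℕ) :
    Set.BijOn (⇑(permQuot n)) (permBraids n) Set.univ := by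
  refine ⟨fun x _ => trivial, ?_, ?_⟩
  · intro x hx y hy hxy
    obtain ⟨zx, hzx⟩ := hx
    obtain ⟨zy, hzy⟩ := hy
    have hsfx : SFB x := SFB_of_dvd hzx
    have hsfy : SFB y := SFB_of_dvd hzy
    refine uniq (lenB x) x y le_rfl hsfx hsfy ?_
    rw [← permQuot_apply, ← permQuot_apply]
    exact hxy
  · intro π _
    obtain ⟨x, hρ, hsf⟩ := exists_sf (NI π) π le_rfl
    obtain ⟨z, hz⟩ := sf_dvd (n * (n - 1)) x hsf (Nat.sub_le _ _)
    exact ⟨x, ⟨z, hz⟩, by rw [permQuot_apply, hρ]⟩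

end BraidGroup
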